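/- Let T be a left continuous t-norm on [0,1] and L a right continuous L-operation on [0,∞]. For all d.d.f.'s f, g and all y ∈ [0,1], ((L⊗T)(f,g))∨(y) = inf{L(f∨(p), g∨(q)) : T(p,q) > y}. -/

import Mathlib

open ENNReal Set

/-- A distance distribution function: increasing `f : [0,∞] → [0,1]` with
`f 0 = 0`, `f ∞ = 1`, left continuous on `(0,∞)`. -/
def IsDDF (f : ℝ≥0∞ → ℝ≥0∞) : Prop :=
  Monotone f ∧ (∀ x, f x ≤ 1) ∧ f 0 = 0 ∧ f ⊤ = 1 ∧
    ∀ x : ℝ≥0∞, 0 < x → x < ⊤ → f x = ⨆ y ∈ Set.Iio x, f y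

/-- The largest quasi-inverse `f∨ y = inf {x | f x > y}`. -/
noncomputable def qInv (f : ℝ≥0∞ → ℝ≥0∞) : ℝ≥0∞ → ℝ≥0∞ :=
  fun y => sInf {x | y < f x}

/-- The unit interval `[0,1]` inside `[0,∞]`. -/
def I01 : Set ℝ≥0∞ := Set.Icc 0 1

/-- A left continuous t-norm on `[0,1]`: commutative, associative, increasing in each
place, identity `1`, left continuous in each variable. -/
def IsLeftContTNorm (T : ℝ≥0∞ → ℝ≥0∞ → ℝ≥0∞) : Prop :=
  (∀ p ∈ I01, ∀ q ∈ I01, T p q ∈ I01) ∧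
  (∀ p ∈ I01, ∀ q ∈ I01, T p q = T q p) ∧
  (∀ p ∈ I01, ∀ q ∈ I01, ∀ r ∈ I01, T (T p q) r = T p (T q r)) ∧
  (∀ p ∈ I01, T p 1 = p) ∧
  (∀ q ∈ I01, ∀ p₁ ∈ I01, ∀ p₂ ∈ I01, p₁ ≤ p₂ → T p₁ q ≤ T p₂ q) ∧
  (∀ q ∈ I01, ∀ p ∈ I01, 0 < p → T p q = ⨆ p' ∈ Set.Iio p, T p' q)

/-- A right continuous `L`-operation on `[0,∞]`: commutative, associative, increasing in
each place, identity `0`, right continuous in each variable. -/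
def IsRightContLOp (L : ℝ≥0∞ → ℝ≥0∞ → ℝ≥0∞) : Prop :=
  (∀ x y, L x y = L y x) ∧
  (∀ x y z, L (L x y) z = L x (L y z)) ∧
  (∀ x, L x 0 = x) ∧
  (∀ y x₁ x₂, x₁ ≤ x₂ → L x₁ y ≤ L x₂ y) ∧
  (∀ y x, x < ⊤ → L x y = ⨅ x' ∈ Set.Ioi x, L x' y)

/-- Joint continuity of a t-norm on `[0,1] × [0,1]`. -/
def TNormContinuous (T : ℝ≥0∞ → ℝ≥0∞ → ℝ≥0∞) : Prop :=
  ContinuousOn (fun pq : ℝ≥0∞ × ℝ≥0∞ => T pq.1 pq.2) (I01 ×ˢ I01)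

/-- The tensor-product triangle function:
`(L ⊗ T)(f,g)(x) = sup {T (f r) (g s) | L r s < x}` for `x < ∞`, and `1` at `∞`. -/
noncomputable def tensor (L T : ℝ≥0∞ → ℝ≥0∞ → ℝ≥0∞) (f g : ℝ≥0∞ → ℝ≥0∞) :
    ℝ≥0∞ → ℝ≥0∞ :=
  fun x => if x = ⊤ then 1 else ⨆ r, ⨆ s, ⨆ _ : L r s < x, T (f r) (g s)

theorem qInv_tensor (T L : ℝ≥0∞ → ℝ≥0∞ → ℝ≥0∞)
    (hT : IsLeftContTNorm T) (hL : IsRightContLOp L)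
    (f g : ℝ≥0∞ → ℝ≥0∞) (hf : IsDDF f) (hg : IsDDF g) :
    ∀ y ∈ Set.Icc (0:ℝ≥0∞) 1,
      qInv (tensor L T f g) y =
        ⨅ p ∈ I01, ⨅ q ∈ I01, ⨅ _ : y < T p q, L (qInv f p) (qInv g q) := by

  obtain ⟨hTmem, hTcomm, hTassoc, hTid, hTmono, hTlc⟩ := hT
  obtain ⟨hLcomm, hLassoc, hLid, hLmono, hLrc⟩ := hL
  obtain ⟨hfm, hf1, hf0, hftop, hflc⟩ := hf
  obtain ⟨hgm, hg1, hg0, hgtop, hglc⟩ := hg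
  have mem01 : ∀ x : ℝ≥0∞, x ≤ 1 → x ∈ I01 := fun x h => ⟨zero_le, h⟩
  have hLtop : ∀ b, L ⊤ b = ⊤ := by
    intro b
    refine top_le_iff.mp ?_
    calc (⊤:ℝ≥0∞) = L ⊤ 0 := (hLid ⊤).symm
      _ = L 0 ⊤ := hLcomm _ _
      _ ≤ L b ⊤ := hLmono _ _ _ zero_le
      _ = L ⊤ b := hLcomm _ _
  have hT0 : ∀ p : ℝ≥0∞, p ≤ 1 → T p 0 = 0 := by
    intro p hp
    refine le_antisymm ?_ zero_le
    calc T p 0 ≤ T 1 0 := hTmono 0 (mem01 _ zero_le_one) p (mem01 _ hp) 1 (mem01 _ le_rfl) hp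
      _ = T 0 1 := hTcomm 1 (mem01 _ le_rfl) 0 (mem01 _ zero_le_one)
      _ = 0 := hTid 0 (mem01 _ zero_le_one)
  intro y hy
  apply le_antisymm
  · -- easy? direction: qInv ≤ inf
    simp only [le_iInf_iff]
    intro p hp q hq hypq
    rcases eq_or_ne (L (qInv f p) (qInv g q)) ⊤ with hatop | hatop
    · simp [hatop]
    have hfp_top : qInv f p ≠ ⊤ := by
      intro h'
      exact hatop (by rw [h', hLtop])
    have hgq_top : qInv g q ≠ ⊤ := by
      intro h'
      exact hatop (by rw [hLcomm, h', hLtop])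
    refine le_of_forall_gt_imp_ge_of_dense ?_
    intro x hax
    refine sInf_le ?_
    show y < tensor L T f g x
    rcases eq_or_ne x ⊤ with rfl | hxtop
    · have h1 : tensor L T f g ⊤ = 1 := by simp [tensor]
      rw [h1]
      exact lt_of_lt_of_le hypq (hTmem p hp q hq).2
    have h1 : L (qInv f p) (qInv g q) = ⨅ r ∈ Set.Ioi (qInv f p), L r (qInv g q) :=
      hLrc _ _ (lt_top_iff_ne_top.mpr hfp_top)
    rw [h1] at hax
    obtain ⟨r, hr, hrx⟩ : ∃ r ∈ Set.Ioi (qInv f p), L r (qInv g q) < x := by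
      simpa [iInf_lt_iff] using hax
    have h2 : L r (qInv g q) = ⨅ s ∈ Set.Ioi (qInv g q), L s r := by
      rw [hLcomm]
      exact hLrc _ _ (lt_top_iff_ne_top.mpr hgq_top)
    rw [h2] at hrx
    obtain ⟨s, hs, hsx⟩ : ∃ s ∈ Set.Ioi (qInv g q), L s r < x := by
      simpa [iInf_lt_iff] using hrx
    have hLrs : L r s < x := by rw [hLcomm]; exact hsx
    have hpfr : p < f r := by
      obtain ⟨r', hr', hr'lt⟩ := sInf_lt_iff.mp (show sInf {x | p < f x} < r from hr)
      exact lt_of_lt_of_le hr' (hfm hr'lt.le)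
    have hqgs : q < g s := by
      obtain ⟨s', hs', hs'lt⟩ := sInf_lt_iff.mp (show sInf {x | q < g x} < s from hs)
      exact lt_of_lt_of_le hs' (hgm hs'lt.le)
    have hfrI : f r ∈ I01 := mem01 _ (hf1 r)
    have hgsI : g s ∈ I01 := mem01 _ (hg1 s)
    have hTle : T p q ≤ T (f r) (g s) := by
      calc T p q ≤ T (f r) q := hTmono q hq p hp (f r) hfrI hpfr.le
        _ = T q (f r) := hTcomm (f r) hfrI q hq
        _ ≤ T (g s) (f r) := hTmono (f r) hfrI q hq (g s) hgsI hqgs.le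
        _ = T (f r) (g s) := hTcomm (g s) hgsI (f r) hfrI
    have hle : T (f r) (g s) ≤ tensor L T f g x := by
      simp only [tensor, if_neg hxtop]
      exact le_iSup_of_le r (le_iSup_of_le s (le_iSup_of_le hLrs le_rfl))
    exact lt_of_lt_of_le hypq (le_trans hTle hle)
  · refine le_sInf ?_
    intro x hx
    rcases eq_or_ne x ⊤ with rfl | hxtop
    · exact le_top
    have hxv : y < ⨆ r, ⨆ s, ⨆ _ : L r s < x, T (f r) (g s) := by
      simpa [tensor, if_neg hxtop] using hx
    obtain ⟨r, s, hrs, hy'⟩ : ∃ r s, L r s < x ∧ y < T (f r) (g s) := by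
      simp only [lt_iSup_iff] at hxv
      obtain ⟨r, s, hrs, hy'⟩ := hxv
      exact ⟨r, s, hrs, hy'⟩
    have hfrI : f r ∈ I01 := mem01 _ (hf1 r)
    have hgsI : g s ∈ I01 := mem01 _ (hg1 s)
    have hfr_pos : 0 < f r := by
      refine pos_iff_ne_zero.mpr fun h0 => ?_
      rw [h0] at hy'
      have : T 0 (g s) = 0 := by
        rw [hTcomm 0 (mem01 _ zero_le_one) (g s) hgsI]
        exact hT0 _ (hg1 s)
      rw [this] at hy'
      exact absurd hy' (not_lt_of_ge zero_le)
    have hlcf : T (f r) (g s) = ⨆ p ∈ Set.Iio (f r), T p (g s) :=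
      hTlc (g s) hgsI (f r) hfrI hfr_pos
    rw [hlcf] at hy'
    obtain ⟨p, hpfr, hyp⟩ : ∃ p ∈ Set.Iio (f r), y < T p (g s) := by
      simpa [lt_iSup_iff] using hy'
    have hpI : p ∈ I01 := mem01 _ (le_trans hpfr.le (hf1 r))
    have hgs_pos : 0 < g s := by
      refine pos_iff_ne_zero.mpr fun h0 => ?_
      rw [h0, hT0 _ hpI.2] at hyp
      exact absurd hyp (not_lt_of_ge zero_le)
    have hlcg : T p (g s) = ⨆ q ∈ Set.Iio (g s), T q p := by
      rw [hTcomm p hpI (g s) hgsI]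
      exact hTlc p hpI (g s) hgsI hgs_pos
    rw [hlcg] at hyp
    obtain ⟨q, hqgs, hyq⟩ : ∃ q ∈ Set.Iio (g s), y < T q p := by
      simpa [lt_iSup_iff] using hyp
    have hqI : q ∈ I01 := mem01 _ (le_trans hqgs.le (hg1 s))
    have hypq : y < T p q := by
      rw [hTcomm p hpI q hqI]; exact hyq
    have hfpr : qInv f p ≤ r := sInf_le hpfr
    have hgqs : qInv g q ≤ s := sInf_le hqgs
    have hLle : L (qInv f p) (qInv g q) ≤ x := by
      calc L (qInv f p) (qInv g q) ≤ L r (qInv g q) := hLmono _ _ _ hfpr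
        _ = L (qInv g q) r := hLcomm _ _
        _ ≤ L s r := hLmono _ _ _ hgqs
        _ = L r s := hLcomm _ _
        _ ≤ x := hrs.le
    refine le_trans (iInf₂_le_of_le p hpI ?_) hLle
    refine iInf₂_le_of_le q hqI ?_
    exact iInf_le _ hypq
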